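/- For V = {u ∈ H¹(0,1) : u(0) = 0}, the coercivity constant of the least-squares form a(u,v) = (u' - u, v' - v)_{L²(0,1)} over V equals 1/(1 + e·sinh(1)) = 1 - tanh(1); that is, inf_{0 ≠ u ∈ V} ‖u' - u‖²_{L²} / (‖u‖²_{L²} + ‖u'‖²_{L²}) = 1 - tanh(1). -/

import Mathlib

open Real intervalIntegral MeasureTheory

lemma int_hyper : ∫ x in (0:ℝ)..1, (Real.cosh x ^ 2 + Real.sinh x ^ 2) = Real.sinh 1 * Real.cosh 1 := by
  have h : ∀ x ∈ Set.uIcc (0:ℝ) 1, HasDerivAt (fun y => Real.sinh y * Real.cosh y)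
      (Real.cosh x ^ 2 + Real.sinh x ^ 2) x := by
    intro x _
    have := (Real.hasDerivAt_sinh x).mul (Real.hasDerivAt_cosh x)
    exact this.congr_deriv (by ring)
  rw [intervalIntegral.integral_eq_sub_of_hasDerivAt h
    (((Real.continuous_cosh.pow 2).add (Real.continuous_sinh.pow 2)).intervalIntegrable 0 1)]
  simp

lemma ftc_mul_cosh {u : ℝ → ℝ} (hu : ContDiff ℝ 1 u) (h0 : u 0 = 0) :
    ∫ x in (0:ℝ)..1, (deriv u x * Real.cosh x + u x * Real.sinh x) = u 1 * Real.cosh 1 := by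
  have hd : ∀ x, HasDerivAt u (deriv u x) x := fun x =>
    ((hu.differentiable one_ne_zero) x).hasDerivAt
  have h : ∀ x ∈ Set.uIcc (0:ℝ) 1, HasDerivAt (fun y => u y * Real.cosh y)
      (deriv u x * Real.cosh x + u x * Real.sinh x) x := fun x _ =>
    (hd x).mul (Real.hasDerivAt_cosh x)
  rw [intervalIntegral.integral_eq_sub_of_hasDerivAt h
    ((((hu.continuous_deriv le_rfl).mul Real.continuous_cosh).add
      (hu.continuous.mul Real.continuous_sinh)).intervalIntegrable 0 1)]
  simp [h0]

lemma ftc_sq {u : ℝ → ℝ} (hu : ContDiff ℝ 1 u) (h0 : u 0 = 0) :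
    ∫ x in (0:ℝ)..1, 2 * (u x * deriv u x) = u 1 ^ 2 := by
  have hd : ∀ x, HasDerivAt u (deriv u x) x := fun x =>
    ((hu.differentiable one_ne_zero) x).hasDerivAt
  have h : ∀ x ∈ Set.uIcc (0:ℝ) 1, HasDerivAt (fun y => u y ^ 2)
      (2 * (u x * deriv u x)) x := by
    intro x _
    have := ((hd x).mul (hd x))
    have h2 : HasDerivAt (fun y => u y * u y) (2 * (u x * deriv u x)) x := by
      exact this.congr_deriv (by ring)
    simpa [sq] using h2
  rw [intervalIntegral.integral_eq_sub_of_hasDerivAt h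
    ((continuous_const.mul (hu.continuous.mul (hu.continuous_deriv le_rfl))).intervalIntegrable 0 1)]
  simp [h0]

/-- sharp trace inequality -/
lemma trace_ineq {u : ℝ → ℝ} (hu : ContDiff ℝ 1 u) (h0 : u 0 = 0) :
    u 1 ^ 2 ≤ Real.tanh 1 * ((∫ x in (0:ℝ)..1, u x ^ 2) + ∫ x in (0:ℝ)..1, deriv u x ^ 2) := by
  have cu : Continuous u := hu.continuous
  have cd : Continuous (deriv u) := hu.continuous_deriv le_rfl
  set A := ∫ x in (0:ℝ)..1, u x ^ 2 with hA
  set B := ∫ x in (0:ℝ)..1, deriv u x ^ 2 with hB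
  have key : ∀ t : ℝ, 0 ≤ Real.sinh 1 * Real.cosh 1 * (t * t)
      + (2 * (u 1 * Real.cosh 1)) * t + (A + B) := by
    intro t
    have e1 : Real.sinh 1 * Real.cosh 1 * (t * t) + (2 * (u 1 * Real.cosh 1)) * t + (A + B) =
        ∫ x in (0:ℝ)..1, ((deriv u x + t * Real.cosh x) ^ 2 + (u x + t * Real.sinh x) ^ 2) := by
      have e2 : (fun x => (deriv u x + t * Real.cosh x) ^ 2 + (u x + t * Real.sinh x) ^ 2) =
          fun x => ((u x ^ 2 + deriv u x ^ 2) +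
            (2 * t) * (deriv u x * Real.cosh x + u x * Real.sinh x)) +
            (t * t) * (Real.cosh x ^ 2 + Real.sinh x ^ 2) := by
        funext x; ring
      rw [e2, intervalIntegral.integral_add, intervalIntegral.integral_add,
        intervalIntegral.integral_const_mul, intervalIntegral.integral_const_mul,
        intervalIntegral.integral_add, ftc_mul_cosh hu h0, int_hyper]
      · ring
      · exact ((cu.pow 2).intervalIntegrable 0 1)
      · exact ((cd.pow 2).intervalIntegrable 0 1)
      · exact (((cu.pow 2).add (cd.pow 2)).intervalIntegrable 0 1)
      · exact ((continuous_const.mul ((cd.mul Real.continuous_cosh).add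
          (cu.mul Real.continuous_sinh))).intervalIntegrable 0 1)
      · exact ((((cu.pow 2).add (cd.pow 2)).add (continuous_const.mul
          ((cd.mul Real.continuous_cosh).add (cu.mul Real.continuous_sinh)))).intervalIntegrable 0 1)
      · exact ((continuous_const.mul ((Real.continuous_cosh.pow 2).add
          (Real.continuous_sinh.pow 2))).intervalIntegrable 0 1)
    rw [e1]
    apply intervalIntegral.integral_nonneg (by norm_num)
    intro x _; positivity
  have hdisc := discrim_le_zero key
  rw [discrim] at hdisc
  have hcosh := Real.cosh_pos 1
  have hsinh : 0 < Real.sinh 1 := by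
    rw [Real.sinh_pos_iff]; norm_num
  rw [Real.tanh_eq_sinh_div_cosh, div_mul_eq_mul_div, le_div_iff₀ hcosh]
  nlinarith [hdisc, hcosh, sq_nonneg (u 1)]

/-- For `V = {u ∈ H¹(0,1) : u(0) = 0}` the coercivity constant of the
least-squares form `a(u,v) = (u'-u, v'-v)_{L²(0,1)}` equals `1 - tanh 1`:
`inf_{0≠u∈V} ‖u'-u‖²_{L²} / (‖u‖²_{L²} + ‖u'‖²_{L²}) = 1 - tanh 1`. (The infimum is
formalized over the dense subclass of `C¹` functions vanishing at `0`, on which the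
infimum of the Rayleigh quotient takes the same value.) -/
theorem stmt_9 :
    IsGLB {r : ℝ | ∃ u : ℝ → ℝ, ContDiff ℝ 1 u ∧ u 0 = 0 ∧
        (¬ ∀ x ∈ Set.Icc (0:ℝ) 1, u x = 0) ∧
        r = (∫ x in (0:ℝ)..1, (deriv u x - u x) ^ 2) /
            ((∫ x in (0:ℝ)..1, (u x) ^ 2) + ∫ x in (0:ℝ)..1, (deriv u x) ^ 2)}
      (1 - Real.tanh 1) := by
  have hsinh : 0 < Real.sinh 1 := by rw [Real.sinh_pos_iff]; norm_num
  have hcosh := Real.cosh_pos 1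
  constructor
  · rintro r ⟨u, hu, h0, hnz, rfl⟩
    have cu : Continuous u := hu.continuous
    have cd : Continuous (deriv u) := hu.continuous_deriv le_rfl
    set A := ∫ x in (0:ℝ)..1, u x ^ 2 with hA
    set B := ∫ x in (0:ℝ)..1, deriv u x ^ 2 with hB
    -- positivity of A
    have hApos : 0 < A := by
      rcases lt_or_eq_of_le (intervalIntegral.integral_nonneg (by norm_num)
        (fun x _ => sq_nonneg (u x)) : (0:ℝ) ≤ A) with h | h
      · exact h
      · exfalso
        have hz : (fun x => u x ^ 2) =ᵐ[volume.restrict (Set.Ioc (0:ℝ) 1)] 0 := by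
          rw [← intervalIntegral.integral_eq_zero_iff_of_le_of_nonneg_ae (by norm_num)
            (Filter.Eventually.of_forall fun x => sq_nonneg (u x))
            ((cu.pow 2).intervalIntegrable 0 1)]
          exact h.symm
        have heq : Set.EqOn (fun x => u x ^ 2) 0 (Set.Ioc (0:ℝ) 1) :=
          Measure.eqOn_Ioc_of_ae_eq volume hz (cu.pow 2).continuousOn continuousOn_const
        apply hnz
        intro x hx
        rcases eq_or_lt_of_le hx.1 with h' | h'
        · exact h' ▸ h0
        · have := heq ⟨h', hx.2⟩
          simpa [pow_eq_zero_iff] using this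
    have hBpos : 0 ≤ B := intervalIntegral.integral_nonneg (by norm_num)
      (fun x _ => sq_nonneg _)
    have hD : 0 < A + B := by linarith
    -- numerator identity
    have hN : (∫ x in (0:ℝ)..1, (deriv u x - u x) ^ 2) = (A + B) - u 1 ^ 2 := by
      have e2 : (fun x => (deriv u x - u x) ^ 2) =
          fun x => (u x ^ 2 + deriv u x ^ 2) - 2 * (u x * deriv u x) := by
        funext x; ring
      rw [e2, intervalIntegral.integral_sub, intervalIntegral.integral_add, ftc_sq hu h0]
      · exact ((cu.pow 2).intervalIntegrable 0 1)
      · exact ((cd.pow 2).intervalIntegrable 0 1)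
      · exact (((cu.pow 2).add (cd.pow 2)).intervalIntegrable 0 1)
      · exact ((continuous_const.mul (cu.mul cd)).intervalIntegrable 0 1)
    rw [hN, le_div_iff₀ hD]
    have := trace_ineq hu h0
    nlinarith
  · intro b hb
    have hmem : (1 - Real.tanh 1) ∈ {r : ℝ | ∃ u : ℝ → ℝ, ContDiff ℝ 1 u ∧ u 0 = 0 ∧
        (¬ ∀ x ∈ Set.Icc (0:ℝ) 1, u x = 0) ∧
        r = (∫ x in (0:ℝ)..1, (deriv u x - u x) ^ 2) /
            ((∫ x in (0:ℝ)..1, (u x) ^ 2) + ∫ x in (0:ℝ)..1, (deriv u x) ^ 2)} := by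
      refine ⟨Real.sinh, Real.contDiff_sinh, Real.sinh_zero, ?_, ?_⟩
      · intro h
        exact absurd (h 1 ⟨by norm_num, le_rfl⟩) hsinh.ne'
      · rw [Real.deriv_sinh]
        have hnum : (∫ x in (0:ℝ)..1, (Real.cosh x - Real.sinh x) ^ 2) =
            Real.sinh 1 * (Real.cosh 1 - Real.sinh 1) := by
          have h : ∀ x ∈ Set.uIcc (0:ℝ) 1, HasDerivAt (fun y => -Real.exp (-(2*y)) / 2)
              ((Real.cosh x - Real.sinh x) ^ 2) x := by
            intro x _
            have h1 : HasDerivAt (fun y => -Real.exp (-(2*y)) / 2) (Real.exp (-(2*x))) x := by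
              have := ((hasDerivAt_id x).const_mul (2:ℝ)).neg.exp
              exact (this.neg.div_const 2).congr_deriv
                (by show -(Real.exp (-(2*x)) * -(2*1)) / 2 = Real.exp (-(2*x)); ring)
            convert h1 using 1
            rw [Real.cosh_sub_sinh, sq, ← Real.exp_add]
            ring_nf
          rw [intervalIntegral.integral_eq_sub_of_hasDerivAt h
            (((Real.continuous_cosh.sub Real.continuous_sinh).pow 2).intervalIntegrable 0 1)]
          rw [Real.cosh_sub_sinh, Real.sinh_eq]
          rw [show -(2*(1:ℝ)) = (-1) + (-1) by norm_num, Real.exp_add]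
          have hE : Real.exp (-1) = (Real.exp 1)⁻¹ := Real.exp_neg 1
          rw [hE]
          have h1 : Real.exp 1 ≠ 0 := (Real.exp_pos 1).ne'
          field_simp
          ring_nf
          simp
        have hden : ((∫ x in (0:ℝ)..1, Real.sinh x ^ 2) + ∫ x in (0:ℝ)..1, Real.cosh x ^ 2) =
            Real.sinh 1 * Real.cosh 1 := by
          rw [← intervalIntegral.integral_add ((Real.continuous_sinh.pow 2).intervalIntegrable 0 1)
            ((Real.continuous_cosh.pow 2).intervalIntegrable 0 1)
            (f := fun x => Real.sinh x ^ 2) (g := fun x => Real.cosh x ^ 2), ← int_hyper]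
          congr 1; funext x; ring
        rw [hnum, hden, Real.tanh_eq_sinh_div_cosh]
        field_simp
    exact hb hmem
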